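/- Let 𝒳 ∈ S(n,m,3) be disconnected with m ≥ n, and let c denote the order of the largest component of 𝒳. Then Δ(𝒳) ≤ ⌊(c+1)/2⌋. -/

import Mathlib

open Finset

/-- The union of the first `k` sets in the ordering `π` (positions `1,…,k`,
i.e. 0-based indices `< k`). -/
def unionUpTo {α : Type*} [DecidableEq α] {m : ℕ} (X : Fin m → Finset α)
    (π : Equiv.Perm (Fin m)) (k : ℕ) : Finset α :=
  (Finset.univ.filter (fun i : Fin m => (i : ℕ) < k)).biUnion (fun i => X (π i))

/-- `Δ(𝒳,π,k) = |X_{π(1)} ∪ ⋯ ∪ X_{π(k)}| − k`. -/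
def delta {α : Type*} [DecidableEq α] {m : ℕ} (X : Fin m → Finset α)
    (π : Equiv.Perm (Fin m)) (k : ℕ) : ℤ :=
  ((unionUpTo X π k).card : ℤ) - k

/-- `Δ(𝒳,π) = max_{1 ≤ k ≤ m} Δ(𝒳,π,k)`. -/
noncomputable def DeltaPerm {α : Type*} [DecidableEq α] {m : ℕ} (X : Fin m → Finset α)
    (π : Equiv.Perm (Fin m)) : ℤ :=
  sSup {d : ℤ | ∃ k : ℕ, 1 ≤ k ∧ k ≤ m ∧ d = delta X π k}

/-- `Δ(𝒳) = min_π Δ(𝒳,π)`. -/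
noncomputable def DeltaMin {α : Type*} [DecidableEq α] {m : ℕ} (X : Fin m → Finset α) : ℤ :=
  sInf {d : ℤ | ∃ π : Equiv.Perm (Fin m), d = DeltaPerm X π}

/-- `f_c(n,m) = max_{𝒳 ∈ S(n,m,c)} Δ(𝒳)`, families of `m` subsets of an
`n`-element ground set, each of size at most `c`. -/
noncomputable def fFam (n m c : ℕ) : ℤ :=
  sSup {d : ℤ | ∃ X : Fin m → Finset (Fin n), (∀ i, (X i).card ≤ c) ∧ d = DeltaMin X}

/-- The graph `G_𝒳`: distinct `x,y` are adjacent iff `{x,y} ⊆ X_i` for some `i`. -/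
def famGraph {α : Type*} {m : ℕ} (X : Fin m → Finset α) : SimpleGraph α where
  Adj x y := x ≠ y ∧ ∃ i, x ∈ X i ∧ y ∈ X i
  symm := by
    constructor
    rintro x y ⟨hxy, i, hx, hy⟩
    exact ⟨hxy.symm, i, hy, hx⟩
  loopless := by
    constructor
    rintro x ⟨hx, -⟩
    exact hx rfl

/-- The vertex set of `G_𝒳`, i.e. `X₁ ∪ ⋯ ∪ X_m`. -/
def groundSet {α : Type*} [DecidableEq α] {m : ℕ} (X : Fin m → Finset α) : Finset α :=
  Finset.univ.biUnion X

/-- `𝒳` is connected: the vertex set is nonempty and every two of its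
vertices are joined by a path of `G_𝒳`. -/
def FamConnected {α : Type*} [DecidableEq α] {m : ℕ} (X : Fin m → Finset α) : Prop :=
  (groundSet X).Nonempty ∧
    ∀ x ∈ groundSet X, ∀ y ∈ groundSet X, (famGraph X).Reachable x y

namespace DMaux

variable {α : Type*} [DecidableEq α] {m : ℕ}

/-- Union of the sets indexed by a list of indices. -/
def ulX (X : Fin m → Finset α) (l : List (Fin m)) : Finset α :=
  l.foldr (fun i acc => X i ∪ acc) ∅

variable (X : Fin m → Finset α)

@[simp] lemma ulX_nil : ulX X [] = ∅ := rfl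

@[simp] lemma ulX_cons (i : Fin m) (l : List (Fin m)) :
    ulX X (i :: l) = X i ∪ ulX X l := rfl

lemma ulX_append (l₁ l₂ : List (Fin m)) :
    ulX X (l₁ ++ l₂) = ulX X l₁ ∪ ulX X l₂ := by
  induction l₁ with
  | nil => simp
  | cons a l ih => simp [ih, Finset.union_assoc]

lemma mem_ulX {a : α} {l : List (Fin m)} :
    a ∈ ulX X l ↔ ∃ i ∈ l, a ∈ X i := by
  induction l with
  | nil => simp
  | cons b l ih => simp [ih, Finset.mem_union]

lemma ulX_eq_of_perm {l₁ l₂ : List (Fin m)} (h : l₁.Perm l₂) :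
    ulX X l₁ = ulX X l₂ := by
  ext a; simp only [mem_ulX]
  exact ⟨fun ⟨i, hi, ha⟩ => ⟨i, h.mem_iff.mp hi, ha⟩,
    fun ⟨i, hi, ha⟩ => ⟨i, h.mem_iff.mpr hi, ha⟩⟩

lemma ulX_take_subset (l : List (Fin m)) (k : ℕ) :
    ulX X (l.take k) ⊆ ulX X l := by
  conv_rhs => rw [← List.take_append_drop k l]
  rw [ulX_append]
  exact Finset.subset_union_left

lemma ulX_subset {l : List (Fin m)} {S : Finset α} (h : ∀ i ∈ l, X i ⊆ S) :
    ulX X l ⊆ S := by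
  intro a ha
  obtain ⟨i, hi, hai⟩ := (mem_ulX X).mp ha
  exact h i hi hai

/-- The key of a block: `|union| - length`. -/
def key (b : List (Fin m)) : ℤ := ((ulX X b).card : ℤ) - b.length

lemma disjoint_ulX_flatten {A : Finset α} {bs : List (List (Fin m))}
    (h : ∀ b ∈ bs, Disjoint A (ulX X b)) : Disjoint A (ulX X bs.flatten) := by
  induction bs with
  | nil => simp
  | cons b bs ih =>
      rw [List.flatten_cons, ulX_append, Finset.disjoint_union_right]
      exact ⟨h b (List.mem_cons_self), ih fun c hc => h c (List.mem_cons_of_mem _ hc)⟩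

theorem blocksLemma (B : ℕ) :
    ∀ (bs : List (List (Fin m))) (s : ℤ), 0 ≤ s →
    bs.Pairwise (fun b b' => key X b ≤ key X b') →
    (bs.map (key X)).sum ≤ s →
    bs.Pairwise (fun b b' => Disjoint (ulX X b) (ulX X b')) →
    (∀ b ∈ bs, ∀ k, (ulX X (b.take k)).card ≤ 2 * k + 1) →
    (∀ b ∈ bs, ((ulX X b).card + 1) / 2 ≤ B) →
    ∀ k, ((ulX X (bs.flatten.take k)).card : ℤ) ≤ k + s + B := by
  intro bs
  induction bs with
  | nil =>
      intro s hs _ _ _ _ _ k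
      simp only [List.flatten_nil, List.take_nil, ulX_nil, Finset.card_empty,
        Nat.cast_zero]
      positivity
  | cons b bs ih =>
      intro s hs hsort hsum hdisj hgrow hbound k
      have hsortc := List.pairwise_cons.mp hsort
      have hkey_le : key X b ≤ s := by
        by_contra hlt
        push_neg at hlt
        have h0 : (0 : ℤ) ≤ (bs.map (key X)).sum :=
          List.sum_nonneg (by
            intro x hx
            obtain ⟨b', hb', rfl⟩ := List.mem_map.mp hx
            exact le_trans (le_of_lt (lt_of_le_of_lt hs hlt)) (hsortc.1 b' hb'))
        have : key X b + (bs.map (key X)).sum ≤ s := by simpa using hsum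
        omega
      rw [List.flatten_cons, List.take_append, ulX_append]
      by_cases hk : k ≤ b.length
      · have : bs.flatten.take (k - b.length) = [] := by
          rw [Nat.sub_eq_zero_of_le hk, List.take_zero]
        rw [this, ulX_nil, Finset.union_empty]
        have h1 : (ulX X (b.take k)).card ≤ 2 * k + 1 := hgrow b (List.mem_cons_self) k
        have h2 : (ulX X (b.take k)).card ≤ (ulX X b).card :=
          Finset.card_le_card (ulX_take_subset X b k)
        have h3 : ((ulX X b).card + 1) / 2 ≤ B := hbound b (List.mem_cons_self)
        rcases Nat.eq_zero_or_pos k with rfl | hk1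
        · simp only [List.take_zero, ulX_nil, Finset.card_empty, Nat.cast_zero]
          positivity
        · have : (ulX X (b.take k)).card ≤ k + B := by omega
          have := (Nat.cast_le (α := ℤ)).mpr this
          push_cast at this ⊢
          omega
      · push_neg at hk
        have hd : Disjoint (ulX X (b.take k)) (ulX X (bs.flatten.take (k - b.length))) := by
          have h1 : ulX X (b.take k) ⊆ ulX X b := ulX_take_subset X b k
          have h2 : ulX X (bs.flatten.take (k - b.length)) ⊆ ulX X bs.flatten :=
            ulX_take_subset X _ _
          exact Finset.disjoint_of_subset_left h1 (Finset.disjoint_of_subset_right h2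
            (disjoint_ulX_flatten X (fun c hc => (List.pairwise_cons.mp hdisj).1 c hc)))
        rw [Finset.card_union_of_disjoint hd]
        have htake : b.take k = b := List.take_of_length_le (le_of_lt hk)
        rw [htake]
        have hrec := ih (s - key X b) (by omega) hsortc.2
          (by
            have : key X b + (bs.map (key X)).sum ≤ s := by simpa using hsum
            omega)
          (List.pairwise_cons.mp hdisj).2
          (fun c hc => hgrow c (List.mem_cons_of_mem _ hc))
          (fun c hc => hbound c (List.mem_cons_of_mem _ hc))
          (k - b.length)
        have hkb : ((k - b.length : ℕ) : ℤ) = (k : ℤ) - b.length :=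
          Nat.cast_sub (le_of_lt hk)
        simp only [key] at hrec hkey_le
        push_cast at hrec ⊢
        omega

/-- The graph determined by the sets indexed by `M`. -/
def graphOf (M : List (Fin m)) : SimpleGraph α where
  Adj x y := x ≠ y ∧ ∃ i ∈ M, x ∈ X i ∧ y ∈ X i
  symm := by constructor; rintro x y ⟨hxy, i, hi, hx, hy⟩; exact ⟨hxy.symm, i, hi, hy, hx⟩
  loopless := by constructor; rintro x ⟨hx, -⟩; exact hx rfl

lemma crossing {G : SimpleGraph α} {u b : α} (w : G.Walk u b) (U : Finset α) :
    u ∈ U → b ∉ U → ∃ x y, G.Adj x y ∧ x ∈ U ∧ y ∉ U := by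
  induction w with
  | nil => intro hu hb; exact absurd hu hb
  | @cons u v b h p ih =>
      intro hu hb
      by_cases hv : v ∈ U
      · exact ih hv hb
      · exact ⟨u, v, h, hu, hv⟩

theorem auxOrder (M₀ : List (Fin m))
    (hconn : ∀ a ∈ ulX X M₀, ∀ b ∈ ulX X M₀, (graphOf X M₀).Reachable a b) :
    ∀ (n : ℕ) (R used : List (Fin m)) (U : Finset α), R.length ≤ n →
    (∀ j ∈ used, X j ⊆ U) → (∀ i ∈ M₀, i ∈ used ∨ i ∈ R) →
    (∀ i ∈ R, i ∈ M₀) → U.Nonempty → U ⊆ ulX X M₀ → (∀ i ∈ R, (X i).Nonempty) →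
    ∃ R' : List (Fin m), R'.Perm R ∧ ∀ k (hk : k < R'.length),
      ((U ∪ ulX X (R'.take k)) ∩ X (R'.get ⟨k, hk⟩)).Nonempty := by
  intro n
  induction n with
  | zero =>
      intro R used U hlen _ _ _ _ _ _
      have : R = [] := List.length_eq_zero_iff.mp (Nat.le_zero.mp hlen)
      subst this
      exact ⟨[], List.Perm.refl _, fun k hk => absurd hk (by simp)⟩
  | succ n ih =>
      intro R used U hlen hused hcover hR hU hUsub hne
      rcases R with _ | ⟨i₀, R₀⟩
      · exact ⟨[], List.Perm.refl _, fun k hk => absurd hk (by simp)⟩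
      -- find i* in R with X i* ∩ U nonempty
      have hRne : (i₀ :: R₀) ≠ [] := by simp
      obtain ⟨istar, histar, hint⟩ :
          ∃ i ∈ (i₀ :: R₀), (X i ∩ U).Nonempty := by
        obtain ⟨b, hb⟩ := hne i₀ (List.mem_cons_self)
        obtain ⟨u, hu⟩ := hU
        by_cases hbU : b ∈ U
        · exact ⟨i₀, List.mem_cons_self, ⟨b, Finset.mem_inter.mpr ⟨hb, hbU⟩⟩⟩
        · have hbM : b ∈ ulX X M₀ :=
            (mem_ulX X).mpr ⟨i₀, hR i₀ (List.mem_cons_self), hb⟩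
          obtain ⟨w⟩ := hconn u (hUsub hu) b hbM
          obtain ⟨x, y, hadj, hxU, hyU⟩ := crossing w U hu hbU
          obtain ⟨hxy, i, hiM, hxi, hyi⟩ := hadj
          have hinotused : i ∉ used := fun h => hyU (hused i h hyi)
          have hiR : i ∈ (i₀ :: R₀) := (hcover i hiM).resolve_left hinotused
          exact ⟨i, hiR, ⟨x, Finset.mem_inter.mpr ⟨hxi, hxU⟩⟩⟩
      set R₂ := (i₀ :: R₀).erase istar with hR₂
      have hpermR : (i₀ :: R₀).Perm (istar :: R₂) := List.perm_cons_erase histar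
      have hlen₂ : R₂.length ≤ n := by
        have := List.length_erase_of_mem histar
        simp only [← hR₂] at this
        simp only [this, List.length_cons] at hlen ⊢
        omega
      obtain ⟨R₂', hperm₂, hprop₂⟩ := ih R₂ (istar :: used) (U ∪ X istar) hlen₂
        (by
          intro j hj
          rcases List.mem_cons.mp hj with rfl | hj
          · exact Finset.subset_union_right
          · exact (hused j hj).trans Finset.subset_union_left)
        (by
          intro i hiM
          rcases hcover i hiM with h | h
          · exact Or.inl (List.mem_cons_of_mem _ h)
          · by_cases hii : i = istar
            · exact Or.inl (hii ▸ List.mem_cons_self)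
            · exact Or.inr ((List.mem_erase_of_ne hii).mpr h))
        (fun i hi => hR i (List.mem_of_mem_erase hi))
        (hU.mono Finset.subset_union_left)
        (by
          apply Finset.union_subset hUsub
          intro a ha
          exact (mem_ulX X).mpr ⟨istar, hR istar histar, ha⟩)
        (fun i hi => hne i (List.mem_of_mem_erase hi))
      refine ⟨istar :: R₂', (hperm₂.cons istar).trans hpermR.symm, ?_⟩
      intro k hk
      rcases k with _ | k
      · simpa [ulX] using hint.mono (by intro a; simp [Finset.mem_inter]; tauto)
      · have hk' : k < R₂'.length := by simpa using hk
        have := hprop₂ k hk'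
        have heq : U ∪ ulX X ((istar :: R₂').take (k + 1)) =
            (U ∪ X istar) ∪ ulX X (R₂'.take k) := by
          simp [ulX, List.take_cons, Finset.union_assoc]
        rw [List.get_cons_succ]
        rw [heq]
        exact this

theorem exists_order (M : List (Fin m)) (hne : ∀ i ∈ M, (X i).Nonempty)
    (hconn : ∀ a ∈ ulX X M, ∀ b ∈ ulX X M, (graphOf X M).Reachable a b) :
    ∃ M' : List (Fin m), M'.Perm M ∧ ∀ k (hk : k < M'.length), 1 ≤ k →
      (ulX X (M'.take k) ∩ X (M'.get ⟨k, hk⟩)).Nonempty := by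
  rcases M with _ | ⟨i₀, M₀⟩
  · refine ⟨[], List.Perm.refl _, ?_⟩
    intro k hk
    simp at hk
  obtain ⟨R', hperm, hprop⟩ := auxOrder X (i₀ :: M₀) hconn M₀.length M₀ [i₀] (X i₀)
    le_rfl
    (by intro j hj; simp at hj; subst hj; rfl)
    (by intro i hi; rcases List.mem_cons.mp hi with h | h
        · exact Or.inl (by simp [h])
        · exact Or.inr h)
    (fun i hi => List.mem_cons_of_mem _ hi)
    (hne i₀ (List.mem_cons_self))
    (by intro a ha; exact (mem_ulX X).mpr ⟨i₀, List.mem_cons_self, ha⟩)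
    (fun i hi => hne i (List.mem_cons_of_mem _ hi))
  refine ⟨i₀ :: R', hperm.cons i₀, ?_⟩
  intro k hk hk1
  rcases k with _ | k
  · omega
  have hk' : k < R'.length := by simpa using hk
  have := hprop k hk'
  have heq : ulX X ((i₀ :: R').take (k + 1)) = X i₀ ∪ ulX X (R'.take k) := by
    simp [ulX, List.take_cons]
  rw [List.get_cons_succ, heq]
  exact this

theorem growth (hcard : ∀ i, (X i).card ≤ 3) (M' : List (Fin m))
    (hint : ∀ k (hk : k < M'.length), 1 ≤ k →
      (ulX X (M'.take k) ∩ X (M'.get ⟨k, hk⟩)).Nonempty) :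
    ∀ k, (ulX X (M'.take k)).card ≤ 2 * k + 1 := by
  intro k
  induction k with
  | zero => simp [ulX]
  | succ k ihk =>
      by_cases hk : k < M'.length
      · have htake : M'.take (k + 1) = M'.take k ++ [M'.get ⟨k, hk⟩] := by
          rw [List.take_succ]
          congr 1
          simp [List.getElem?_eq_getElem hk]
        have hulx : ulX X (M'.take (k + 1)) = ulX X (M'.take k) ∪ X (M'.get ⟨k, hk⟩) := by
          rw [htake, ulX_append]
          congr 1
          simp [ulX]
        rcases Nat.eq_zero_or_pos k with rfl | hk1
        · rw [hulx]
          simp only [List.take_zero, ulX, List.foldr_nil, Finset.empty_union]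
          have := hcard (M'.get ⟨0, hk⟩)
          omega
        · have hne := hint k hk hk1
          rw [hulx]
          have hcardu : (ulX X (M'.take k) ∪ X (M'.get ⟨k, hk⟩)).card =
              (X (M'.get ⟨k, hk⟩) \ ulX X (M'.take k)).card + (ulX X (M'.take k)).card := by
            rw [Finset.card_sdiff_add_card, Finset.union_comm]
          have hdiff : (X (M'.get ⟨k, hk⟩) \ ulX X (M'.take k)).card <
              (X (M'.get ⟨k, hk⟩)).card := by
            apply Finset.card_lt_card
            constructor
            · exact Finset.sdiff_subset
            · intro hsub
              obtain ⟨a, ha⟩ := hne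
              rw [Finset.mem_inter] at ha
              have := hsub ha.2
              rw [Finset.mem_sdiff] at this
              exact this.2 ha.1
          have := hcard (M'.get ⟨k, hk⟩)
          omega
      · push_neg at hk
        rw [List.take_of_length_le (by omega), ← List.take_of_length_le hk]
        omega

section Components
variable [Fintype α]

lemma mem_ground_of_mem {a : α} {i : Fin m} (h : a ∈ X i) : a ∈ groundSet X :=
  Finset.mem_biUnion.mpr ⟨i, Finset.mem_univ i, h⟩

lemma reachable_mem_ground : ∀ {x y : α}, (famGraph X).Walk x y →
    x ∈ groundSet X → y ∈ groundSet X := by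
  intro x y w
  induction w with
  | nil => exact id
  | @cons u v b h p ih =>
      intro _
      obtain ⟨-, i, -, hv⟩ := h
      exact ih (mem_ground_of_mem X hv)

open scoped Classical in
noncomputable def compOf (x : α) : Finset α :=
  (groundSet X).filter (fun y => (famGraph X).Reachable x y)

lemma mem_compOf {x y : α} :
    y ∈ compOf X x ↔ y ∈ groundSet X ∧ (famGraph X).Reachable x y := by
  simp [compOf]

lemma self_mem_compOf {x : α} (hx : x ∈ groundSet X) : x ∈ compOf X x :=
  (mem_compOf X).mpr ⟨hx, SimpleGraph.Reachable.refl x⟩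

lemma compOf_subset_ground (x : α) : compOf X x ⊆ groundSet X := by
  classical
  intro y hy
  exact ((mem_compOf X).mp hy).1

lemma set_subset_compOf {x x₀ : α} {i : Fin m} (hxi : x ∈ X i)
    (hx : x ∈ compOf X x₀) : X i ⊆ compOf X x₀ := by
  intro z hz
  obtain ⟨hxg, hreach⟩ := (mem_compOf X).mp hx
  by_cases hzx : z = x
  · subst hzx; exact hx
  · have hadj : (famGraph X).Adj x z := ⟨fun h => hzx h.symm, i, hxi, hz⟩
    exact (mem_compOf X).mpr ⟨mem_ground_of_mem X hz, hreach.trans hadj.reachable⟩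

lemma compOf_eq {x₀ x₁ : α} (h : (famGraph X).Reachable x₀ x₁) :
    compOf X x₀ = compOf X x₁ := by
  ext y
  simp only [mem_compOf]
  exact ⟨fun ⟨hg, r⟩ => ⟨hg, h.symm.trans r⟩, fun ⟨hg, r⟩ => ⟨hg, h.trans r⟩⟩

noncomputable def comps : Finset (Finset α) := (groundSet X).image (compOf X)

lemma comps_disjoint {C C' : Finset α} (hC : C ∈ comps X) (hC' : C' ∈ comps X)
    (hne : C ≠ C') : Disjoint C C' := by
  obtain ⟨x₀, hx₀, rfl⟩ := Finset.mem_image.mp hC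
  obtain ⟨x₁, hx₁, rfl⟩ := Finset.mem_image.mp hC'
  rw [Finset.disjoint_left]
  intro z hz hz'
  obtain ⟨-, h₀⟩ := (mem_compOf X).mp hz
  obtain ⟨-, h₁⟩ := (mem_compOf X).mp hz'
  exact hne ((compOf_eq X h₀).trans (compOf_eq X h₁).symm)

lemma ground_eq_biUnion : groundSet X = (comps X).biUnion id := by
  ext a
  constructor
  · intro ha
    exact Finset.mem_biUnion.mpr ⟨compOf X a, Finset.mem_image_of_mem _ ha,
      self_mem_compOf X ha⟩
  · intro ha
    obtain ⟨C, hC, haC⟩ := Finset.mem_biUnion.mp ha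
    obtain ⟨x₀, -, rfl⟩ := Finset.mem_image.mp hC
    exact compOf_subset_ground X x₀ haC

lemma sum_comps_card : ∑ C ∈ comps X, C.card = (groundSet X).card := by
  rw [ground_eq_biUnion X, Finset.card_biUnion]
  · rfl
  · intro C hC C' hC' hne
    exact comps_disjoint X hC hC' hne

def MC (C : Finset α) : List (Fin m) :=
  (List.finRange m).filter (fun i => decide ((X i).Nonempty ∧ X i ⊆ C))

def emptyIdx : List (Fin m) :=
  (List.finRange m).filter (fun i => decide (X i = ∅))

lemma mem_MC {C : Finset α} {i : Fin m} : i ∈ MC X C ↔ (X i).Nonempty ∧ X i ⊆ C := by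
  simp [MC]

lemma ulX_MC {C : Finset α} (hC : C ∈ comps X) : ulX X (MC X C) = C := by
  obtain ⟨x₀, hx₀, rfl⟩ := Finset.mem_image.mp hC
  apply Finset.Subset.antisymm
  · intro a ha
    obtain ⟨i, hi, hai⟩ := (mem_ulX X).mp ha
    exact ((mem_MC X).mp hi).2 hai
  · intro a ha
    have hag : a ∈ groundSet X := compOf_subset_ground X x₀ ha
    obtain ⟨i, -, hai⟩ := Finset.mem_biUnion.mp hag
    have hsub : X i ⊆ compOf X x₀ := set_subset_compOf X hai ha
    exact (mem_ulX X).mpr ⟨i, (mem_MC X).mpr ⟨⟨a, hai⟩, hsub⟩, hai⟩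

lemma walk_transfer {x₀ : α} : ∀ {a b : α}, (famGraph X).Walk a b →
    a ∈ compOf X x₀ → (graphOf X (MC X (compOf X x₀))).Reachable a b := by
  intro a b w
  induction w with
  | nil => intro _; exact SimpleGraph.Reachable.refl _
  | @cons u v b h p ih =>
      intro hu
      obtain ⟨huv, i, hui, hvi⟩ := h
      have hsub : X i ⊆ compOf X x₀ := set_subset_compOf X hui hu
      have hiM : i ∈ MC X (compOf X x₀) := (mem_MC X).mpr ⟨⟨u, hui⟩, hsub⟩
      have hadj : (graphOf X (MC X (compOf X x₀))).Adj u v := ⟨huv, i, hiM, hui, hvi⟩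
      exact hadj.reachable.trans (ih (hsub hvi))

lemma MC_conn {C : Finset α} (hC : C ∈ comps X) :
    ∀ a ∈ ulX X (MC X C), ∀ b ∈ ulX X (MC X C), (graphOf X (MC X C)).Reachable a b := by
  obtain ⟨x₀, hx₀, rfl⟩ := Finset.mem_image.mp hC
  have hCC : ulX X (MC X (compOf X x₀)) = compOf X x₀ := ulX_MC X hC
  intro a ha b hb
  rw [hCC] at ha hb
  obtain ⟨-, hra⟩ := (mem_compOf X).mp ha
  obtain ⟨-, hrb⟩ := (mem_compOf X).mp hb
  obtain ⟨w⟩ := hra.symm.trans hrb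
  exact walk_transfer X w ha



lemma partition_perm :
    ∀ (cs : List (Finset α)), cs.Pairwise (fun C C' => Disjoint C C') →
    ∀ (J : List (Fin m)), (∀ i ∈ J, X i = ∅ ∨ ∃ C ∈ cs, (X i).Nonempty ∧ X i ⊆ C) →
    J.Perm (J.filter (fun i => decide (X i = ∅)) ++
      (cs.map (fun C => J.filter (fun i => decide ((X i).Nonempty ∧ X i ⊆ C)))).flatten) := by
  intro cs
  induction cs with
  | nil =>
      intro _ J hcov
      have : J.filter (fun i => decide (X i = ∅)) = J := by
        rw [List.filter_eq_self]
        intro i hi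
        rcases hcov i hi with h | ⟨C, hC, -⟩
        · exact decide_eq_true h
        · exact absurd hC List.not_mem_nil
      simp [this]
  | cons C cs' ih =>
      intro hdisj J hcov
      obtain ⟨hhead, htail⟩ := List.pairwise_cons.mp hdisj
      set p : Fin m → Bool := fun i => decide ((X i).Nonempty ∧ X i ⊆ C) with hp
      set J' : List (Fin m) := J.filter (fun i => !p i) with hJ'
      have hsplit : (J.filter p ++ J').Perm J := List.filter_append_perm p J
      have hcov' : ∀ i ∈ J', X i = ∅ ∨ ∃ C' ∈ cs', (X i).Nonempty ∧ X i ⊆ C' := by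
        intro i hi
        have hiJ : i ∈ J := List.mem_of_mem_filter hi
        have hnotp : p i = false := by
          have := (List.mem_filter.mp hi).2
          simpa using this
        rcases hcov i hiJ with h | ⟨C', hC', hne', hsub'⟩
        · exact Or.inl h
        · rcases List.mem_cons.mp hC' with rfl | hC''
          · exfalso
            rw [hp] at hnotp
            simp only [decide_eq_false_iff_not] at hnotp
            exact hnotp ⟨hne', hsub'⟩
          · exact Or.inr ⟨C', hC'', hne', hsub'⟩
      have hIH := ih htail J' hcov'
      have he : J'.filter (fun i => decide (X i = ∅)) = J.filter (fun i => decide (X i = ∅)) := by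
        rw [hJ', List.filter_filter]
        apply List.filter_congr
        intro i _
        by_cases h : X i = ∅
        · have : p i = false := by
            rw [hp]; simp [h]
          simp [h, this]
        · simp [h]
      have hq : ∀ C' ∈ cs',
          J'.filter (fun i => decide ((X i).Nonempty ∧ X i ⊆ C')) =
          J.filter (fun i => decide ((X i).Nonempty ∧ X i ⊆ C')) := by
        intro C' hC'
        rw [hJ', List.filter_filter]
        apply List.filter_congr
        intro i _
        by_cases h : (X i).Nonempty ∧ X i ⊆ C'
        · have hpf : p i = false := by
            rw [hp]
            simp only [decide_eq_false_iff_not]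
            rintro ⟨hne2, hsub2⟩
            obtain ⟨a, ha⟩ := hne2
            exact Finset.disjoint_left.mp (hhead C' hC') (hsub2 ha) (h.2 ha)
          simp [h, hpf]
        · simp [h]
      have hmapeq : cs'.map (fun C' => J'.filter (fun i => decide ((X i).Nonempty ∧ X i ⊆ C'))) =
          cs'.map (fun C' => J.filter (fun i => decide ((X i).Nonempty ∧ X i ⊆ C'))) :=
        List.map_congr_left hq
      rw [he, hmapeq] at hIH
      refine hsplit.symm.trans ?_
      refine (hIH.append_left (J.filter p)).trans ?_
      rw [List.map_cons, List.flatten_cons]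
      rw [← List.append_assoc, ← List.append_assoc]
      exact (List.perm_append_comm).append_right _


lemma keysum : ∀ bl : List (List (Fin m)),
    (bl.map (key X)).sum = (bl.map (fun b => ((ulX X b).card : ℤ))).sum - bl.flatten.length := by
  intro bl
  induction bl with
  | nil => simp
  | cons b bl ih =>
      simp only [List.map_cons, List.sum_cons, List.flatten_cons, List.length_append, key, ih]
      push_cast
      ring

lemma flatten_singletons : ∀ l : List (Fin m), (l.map (fun i => ([i] : List (Fin m)))).flatten = l := by
  intro l
  induction l with
  | nil => simp
  | cons a l ih => simp [ih]

lemma flatten_map_perm {β : Type*} (L : List β) (f g : β → List (Fin m))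
    (h : ∀ x ∈ L, (f x).Perm (g x)) :
    ((L.map f).flatten).Perm ((L.map g).flatten) := by
  induction L with
  | nil => simp
  | cons a L ih =>
      simp only [List.map_cons, List.flatten_cons]
      exact (h a (List.mem_cons_self)).append
        (ih (fun x hx => h x (List.mem_cons_of_mem _ hx)))

theorem exists_good_order (c : ℕ) (hcard : ∀ i, (X i).card ≤ 3)
    (hmn : (groundSet X).card ≤ m)
    (hcomp : ∀ x ∈ groundSet X, (compOf X x).card ≤ c) :
    ∃ l : List (Fin m), l.Perm (List.finRange m) ∧
      ∀ k, ((ulX X (l.take k)).card : ℤ) ≤ k + ((c + 1) / 2 : ℕ) := by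
  classical
  set B : ℕ := (c + 1) / 2 with hB
  have hord : ∀ M : List (Fin m), ∃ M' : List (Fin m), M'.Perm M ∧
      ((∀ i ∈ M, (X i).Nonempty) →
       (∀ a ∈ ulX X M, ∀ b ∈ ulX X M, (graphOf X M).Reachable a b) →
       ∀ k (hk : k < M'.length), 1 ≤ k →
         (ulX X (M'.take k) ∩ X (M'.get ⟨k, hk⟩)).Nonempty) := by
    intro M
    by_cases h1 : (∀ i ∈ M, (X i).Nonempty) ∧
        (∀ a ∈ ulX X M, ∀ b ∈ ulX X M, (graphOf X M).Reachable a b)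
    · obtain ⟨M', hp, hq⟩ := exists_order X M h1.1 h1.2
      exact ⟨M', hp, fun _ _ k hk hk1 => hq k hk hk1⟩
    · refine ⟨M, List.Perm.refl _, fun ha hb => absurd ⟨ha, hb⟩ h1⟩
  choose ord hordperm hordprop using hord
  set blocks : List (List (Fin m)) :=
    ((comps X).toList.map (fun C => ord (MC X C))) ++
      ((emptyIdx X).map (fun i => ([i] : List (Fin m)))) with hblocks
  set r : List (Fin m) → List (Fin m) → Prop := fun b b' => key X b ≤ key X b' with hr
  letI : DecidableRel r := fun b b' => Int.decLe _ _
  letI htot : IsTotal (List (Fin m)) r := ⟨fun b b' => le_total _ _⟩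
  letI htrans : IsTrans (List (Fin m)) r := ⟨fun _ _ _ => le_trans⟩
  set bs : List (List (Fin m)) := List.insertionSort r blocks with hbs
  set l : List (Fin m) := bs.flatten with hl
  have hbsperm : bs.Perm blocks := List.perm_insertionSort r blocks
  -- membership facts
  have hMCne : ∀ C, ∀ i ∈ MC X C, (X i).Nonempty := fun C i hi => ((mem_MC X).mp hi).1
  have hprop : ∀ C ∈ comps X, ∀ k (hk : k < (ord (MC X C)).length), 1 ≤ k →
      (ulX X ((ord (MC X C)).take k) ∩ X ((ord (MC X C)).get ⟨k, hk⟩)).Nonempty :=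
    fun C hC => hordprop (MC X C) (hMCne C) (MC_conn X hC)
  have hulord : ∀ C ∈ comps X, ulX X (ord (MC X C)) = C := fun C hC =>
    (ulX_eq_of_perm X (hordperm (MC X C))).trans (ulX_MC X hC)
  have hemptymem : ∀ i ∈ emptyIdx X, X i = ∅ := by
    intro i hi
    have := (List.mem_filter.mp hi).2
    simpa using this
  have hulsingle : ∀ i ∈ emptyIdx X, ulX X [i] = ∅ := by
    intro i hi
    simp [ulX, hemptymem i hi]
  -- the permutation fact
  have hcover : ∀ i ∈ List.finRange m, X i = ∅ ∨
      ∃ C ∈ (comps X).toList, (X i).Nonempty ∧ X i ⊆ C := by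
    intro i _
    by_cases h : X i = ∅
    · exact Or.inl h
    · obtain ⟨x, hx⟩ := Finset.nonempty_iff_ne_empty.mpr h
      refine Or.inr ⟨compOf X x, ?_, ⟨x, hx⟩, ?_⟩
      · exact Finset.mem_toList.mpr (Finset.mem_image_of_mem _ (mem_ground_of_mem X hx))
      · exact set_subset_compOf X hx (self_mem_compOf X (mem_ground_of_mem X hx))
  have hcs_disj : ((comps X).toList).Pairwise (fun C C' => Disjoint C C') := by
    have := (Finset.nodup_toList (comps X))
    refine List.Pairwise.imp_of_mem ?_ this
    intro C C' hC hC' hne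
    exact comps_disjoint X (Finset.mem_toList.mp hC) (Finset.mem_toList.mp hC') hne
  have hpart := partition_perm X ((comps X).toList) hcs_disj (List.finRange m)
    hcover
  have hMCfilter : ∀ C, (List.finRange m).filter
      (fun i => decide ((X i).Nonempty ∧ X i ⊆ C)) = MC X C := fun C => rfl
  have hEfilter : (List.finRange m).filter (fun i => decide (X i = ∅)) = emptyIdx X := rfl
  rw [hEfilter] at hpart
  have hflatperm : blocks.flatten.Perm (List.finRange m) := by
    rw [hblocks, List.flatten_append]
    have h1 : (((comps X).toList.map (fun C => ord (MC X C))).flatten).Perm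
        (((comps X).toList.map (fun C => MC X C)).flatten) :=
      flatten_map_perm _ _ _ (fun C _ => hordperm (MC X C))
    have h2 : ((emptyIdx X).map (fun i => ([i] : List (Fin m)))).flatten = emptyIdx X :=
      flatten_singletons _
    rw [h2]
    refine (h1.append_right _).trans ((List.perm_append_comm).trans ?_)
    exact hpart.symm
  have hlperm : l.Perm (List.finRange m) := (hbsperm.flatten).trans hflatperm
  have hllen : l.length = m := by
    rw [hlperm.length_eq, List.length_finRange]
  -- apply blocksLemma
  have hsorted : bs.Pairwise (fun b b' => key X b ≤ key X b') :=
    List.pairwise_insertionSort r blocks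
  have hsum : (bs.map (key X)).sum ≤ (0 : ℤ) := by
    rw [keysum X bs]
    have hcards : (bs.map (fun b => ((ulX X b).card : ℤ))).sum =
        (blocks.map (fun b => ((ulX X b).card : ℤ))).sum :=
      (hbsperm.map _).sum_eq
    have hflen : (bs.flatten.length : ℤ) = (m : ℤ) := by
      rw [← hl, hllen]
    rw [hcards, hflen]
    have hblockcards : (blocks.map (fun b => ((ulX X b).card : ℤ))).sum =
        ((groundSet X).card : ℤ) := by
      rw [hblocks, List.map_append, List.sum_append, List.map_map, List.map_map]
      have hA : ((comps X).toList.map ((fun b => ((ulX X b).card : ℤ)) ∘ (fun C => ord (MC X C)))).sum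
          = ((groundSet X).card : ℤ) := by
        rw [List.map_congr_left (f := ((fun b => ((ulX X b).card : ℤ)) ∘ (fun C => ord (MC X C))))
          (g := fun C => ((C.card : ℕ) : ℤ)) ?_]
        · rw [Finset.sum_map_toList]
          exact_mod_cast sum_comps_card X
        · intro C hC
          simp only [Function.comp_apply]
          rw [hulord C (Finset.mem_toList.mp hC)]
      have hE : ((emptyIdx X).map ((fun b => ((ulX X b).card : ℤ)) ∘ (fun i => ([i] : List (Fin m))))).sum = 0 := by
        apply List.sum_eq_zero
        intro x hx
        obtain ⟨i, hi, rfl⟩ := List.mem_map.mp hx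
        simp [Function.comp_apply, hulsingle i hi]
      rw [hA, hE, add_zero]
    rw [hblockcards]
    have : ((groundSet X).card : ℤ) ≤ (m : ℤ) := by exact_mod_cast hmn
    omega
  have hdisj : bs.Pairwise (fun b b' => Disjoint (ulX X b) (ulX X b')) := by
    rw [List.Perm.pairwise_iff (fun h => h.symm) hbsperm]
    rw [hblocks, List.pairwise_append]
    refine ⟨?_, ?_, ?_⟩
    · rw [List.pairwise_map]
      have hnd := Finset.nodup_toList (comps X)
      refine List.Pairwise.imp_of_mem ?_ hnd
      intro C C' hC hC' hne
      rw [hulord C (Finset.mem_toList.mp hC), hulord C' (Finset.mem_toList.mp hC')]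
      exact comps_disjoint X (Finset.mem_toList.mp hC) (Finset.mem_toList.mp hC') hne
    · apply List.pairwise_of_forall_mem_list
      intro a ha b hb
      obtain ⟨i, hi, rfl⟩ := List.mem_map.mp ha
      rw [hulsingle i hi]
      exact Finset.disjoint_empty_left _
    · intro a ha b hb
      obtain ⟨i, hi, rfl⟩ := List.mem_map.mp hb
      rw [hulsingle i hi]
      exact Finset.disjoint_empty_right _
  have hgrow : ∀ b ∈ bs, ∀ k, (ulX X (b.take k)).card ≤ 2 * k + 1 := by
    intro b hb
    have hb' : b ∈ blocks := hbsperm.mem_iff.mp hb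
    rw [hblocks, List.mem_append] at hb'
    rcases hb' with hb' | hb'
    · obtain ⟨C, hC, rfl⟩ := List.mem_map.mp hb'
      exact growth X hcard _ (hprop C (Finset.mem_toList.mp hC))
    · obtain ⟨i, hi, rfl⟩ := List.mem_map.mp hb'
      intro k
      rcases k with _ | k
      · simp [ulX]
      · have : ([i] : List (Fin m)).take (k+1) = [i] := by simp
        rw [this, hulsingle i hi]
        simp
  have hbound : ∀ b ∈ bs, ((ulX X b).card + 1) / 2 ≤ B := by
    intro b hb
    have hb' : b ∈ blocks := hbsperm.mem_iff.mp hb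
    rw [hblocks, List.mem_append] at hb'
    rcases hb' with hb' | hb'
    · obtain ⟨C, hC, rfl⟩ := List.mem_map.mp hb'
      rw [hulord C (Finset.mem_toList.mp hC)]
      have hCm := Finset.mem_toList.mp hC
      obtain ⟨x₀, hx₀, rfl⟩ := Finset.mem_image.mp hCm
      have := hcomp x₀ hx₀
      rw [hB]
      exact Nat.div_le_div_right (by omega)
    · obtain ⟨i, hi, rfl⟩ := List.mem_map.mp hb'
      rw [hulsingle i hi]
      simp
  have hmain := blocksLemma X B bs 0 le_rfl hsorted hsum hdisj hgrow hbound
  refine ⟨l, hlperm, ?_⟩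
  intro k
  have := hmain k
  rw [← hl] at this
  omega

end Components

end DMaux

/-- If `𝒳 ∈ S(n,m,3)` is disconnected and `m ≥ n`, then
`Δ(𝒳) ≤ ⌊(c+1)/2⌋` where `c` is the order of the largest component of `𝒳`. -/
theorem DeltaMin_le_of_disconnected (n m c : ℕ) (hm : n ≤ m)
    (X : Fin m → Finset (Fin n)) (hcard : ∀ i, (X i).card ≤ 3)
    (hdisc : ¬ FamConnected X)
    (hc : c = (groundSet X).sup
        (fun x => {y | (famGraph X).Reachable x y}.ncard)) :
    DeltaMin X ≤ ((c + 1) / 2 : ℕ) := by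
  classical
  have hmn : (groundSet X).card ≤ m :=
    le_trans (le_trans (Finset.card_le_univ _) (by simp)) hm
  have hcomp : ∀ x ∈ groundSet X, (DMaux.compOf X x).card ≤ c := by
    intro x hx
    have hle : {y | (famGraph X).Reachable x y}.ncard ≤
        (groundSet X).sup (fun x => {y | (famGraph X).Reachable x y}.ncard) :=
      Finset.le_sup (f := fun x => {y | (famGraph X).Reachable x y}.ncard) hx
    rw [← hc] at hle
    have hset : {y | (famGraph X).Reachable x y} = ↑(DMaux.compOf X x) := by
      ext y
      simp only [Set.mem_setOf_eq, Finset.coe_sort_coe, Finset.mem_coe,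
        DMaux.mem_compOf]
      constructor
      · intro hr
        obtain ⟨w⟩ := hr
        exact ⟨DMaux.reachable_mem_ground X w hx, ⟨w⟩⟩
      · tauto
    rwa [hset, Set.ncard_coe_finset] at hle
  obtain ⟨l, hlperm, hbnd⟩ := DMaux.exists_good_order X c hcard hmn hcomp
  have hllen : l.length = m := by rw [hlperm.length_eq, List.length_finRange]
  have hnodup : l.Nodup := (hlperm.nodup_iff).mpr (List.nodup_finRange m)
  set f : Fin m → Fin m := fun i => l.get (Fin.cast hllen.symm i) with hf
  have hinj : Function.Injective f := by
    intro a b hab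
    have h1 := (List.nodup_iff_injective_get.mp hnodup) hab
    have h2 : ((Fin.cast hllen.symm a : Fin l.length) : ℕ) =
        ((Fin.cast hllen.symm b : Fin l.length) : ℕ) := by rw [h1]
    exact Fin.ext h2
  set π : Equiv.Perm (Fin m) := Equiv.ofBijective f ((Finite.injective_iff_bijective).mp hinj)
  have hbridge : ∀ k, k ≤ m → unionUpTo X π k = DMaux.ulX X (l.take k) := by
    intro k
    induction k with
    | zero =>
        intro _
        ext a
        simp [unionUpTo, DMaux.ulX]
    | succ k ih =>
        intro hk1
        have hk : k < m := hk1
        have hklen : k < l.length := by omega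
        have ihh := ih (le_of_lt hk)
        have hfilter : (Finset.univ.filter (fun i : Fin m => (i : ℕ) < k + 1)) =
            insert (⟨k, hk⟩ : Fin m) (Finset.univ.filter (fun i : Fin m => (i : ℕ) < k)) := by
          ext i
          simp only [Finset.mem_filter, Finset.mem_univ, true_and, Finset.mem_insert,
            Fin.ext_iff]
          omega
        have h1 : unionUpTo X π (k + 1) = X (π ⟨k, hk⟩) ∪ unionUpTo X π k := by
          simp only [unionUpTo]
          rw [hfilter, Finset.biUnion_insert]
        have htake : l.take (k + 1) = l.take k ++ [l.get ⟨k, hklen⟩] := by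
          rw [List.take_succ]
          congr 1
          simp [List.getElem?_eq_getElem hklen]
        have h2 : DMaux.ulX X (l.take (k + 1)) =
            DMaux.ulX X (l.take k) ∪ X (l.get ⟨k, hklen⟩) := by
          rw [htake, DMaux.ulX_append]
          congr 1
          simp [DMaux.ulX]
        have h3 : π ⟨k, hk⟩ = l.get ⟨k, hklen⟩ := rfl
        rw [h1, h2, ihh, h3, Finset.union_comm]
  have hdp : DeltaPerm X π ≤ (((c + 1) / 2 : ℕ) : ℤ) := by
    rcases Nat.eq_zero_or_pos m with hm0 | hm1
    · have hempty : {d : ℤ | ∃ k : ℕ, 1 ≤ k ∧ k ≤ m ∧ d = delta X π k} = ∅ := by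
        ext d
        simp only [Set.mem_setOf_eq, Set.mem_empty_iff_false, iff_false, not_exists]
        intro k
        omega
      rw [DeltaPerm, hempty, Int.csSup_empty]
      positivity
    · have hne : {d : ℤ | ∃ k : ℕ, 1 ≤ k ∧ k ≤ m ∧ d = delta X π k}.Nonempty :=
        ⟨delta X π 1, 1, le_rfl, hm1, rfl⟩
      apply csSup_le hne
      rintro d ⟨k, hk1, hkm, rfl⟩
      have hb := hbnd k
      rw [delta, hbridge k hkm]
      omega
  have hdm : DeltaMin X ≤ DeltaPerm X π := by
    have hrange : {d : ℤ | ∃ π' : Equiv.Perm (Fin m), d = DeltaPerm X π'} =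
        Set.range (DeltaPerm X) := by
      ext d
      simp [Set.mem_range, eq_comm]
    have hbdd : BddBelow {d : ℤ | ∃ π' : Equiv.Perm (Fin m), d = DeltaPerm X π'} := by
      rw [hrange]
      exact (Set.finite_range _).bddBelow
    exact csInf_le hbdd ⟨π, rfl⟩
  exact le_trans hdm hdp
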